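/- Assume: (i) for all integers h₁ ≠ h₂ and every polynomial Q ∈ ℝ[x], lim_{N→∞} (1/log N) ∑_{n=1}^{N} μ(n+h₁)μ(n+h₂)e(Q(n))/n = 0; and (ii) lim_{N→∞} (1/log N) ∑_{n=1}^{N} μ(n)²/n = 6/π². Then for every P ∈ ℝ[x] and all integers s ≥ 1, h ≥ 1: lim_{N→∞} (1/log N) ∑_{n=1}^{N} (1/n) |(1/h) ∑_{l=1}^{h} μ(n+ls) e(P(n+ls))|² = 6/(π² h). Consequently, by Cauchy–Schwarz, limsup_{N→∞} (1/log N) ∑_{n=1}^{N} (1/n)|(1/h)∑_{l=1}^{h} μ(n+ls)e(P(n+ls))| ≤ √(6/π²)·h^{−1/2}, a bound independent of s. -/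

import Mathlib

open Finset Filter ArithmeticFunction Real

/-- `e(α) = e^{2πiα}` -/
noncomputable def e (x : ℝ) : ℂ := Complex.exp (2 * Real.pi * Complex.I * x)


lemma moeb_sq_le_one (k : ℕ) : ((moebius k : ℤ) : ℝ) ^ 2 ≤ 1 := by
  have h := abs_moebius_le_one (n := k)
  have h2 : (moebius k : ℤ) ^ 2 ≤ 1 := by
    have := abs_nonneg (moebius k : ℤ)
    nlinarith [sq_abs (moebius k : ℤ)]
  exact_mod_cast h2

lemma tendsto_one_div_log : Tendsto (fun N : ℕ => 1 / Real.log N) atTop (nhds 0) := by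
  simp only [one_div]
  exact (Real.tendsto_log_atTop.comp tendsto_natCast_atTop_atTop).inv_tendsto_atTop

lemma sum_sq_inv_le (N : ℕ) : ∑ n ∈ Icc 1 N, (1 : ℝ) / (n:ℝ)^2 ≤ π^2/6 :=
  sum_le_hasSum _ (fun i _ => by positivity) hasSum_zeta_two

noncomputable def FF : ℕ → ℝ := fun k => ((moebius k : ℤ) : ℝ)^2 / k

lemma FF_nonneg (k : ℕ) : 0 ≤ FF k := by unfold FF; positivity

lemma FF_le_one (k : ℕ) : FF k ≤ 1 := by
  unfold FF
  rcases Nat.eq_zero_or_pos k with rfl | hk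
  · simp
  · have h1 : ((moebius k : ℤ) : ℝ)^2 ≤ 1 := moeb_sq_le_one k
    have h2 : (1:ℝ) ≤ k := by exact_mod_cast hk
    rw [div_le_one (by linarith)]
    linarith

lemma shifted_bound (m N : ℕ) :
    |∑ n ∈ Icc 1 N, ((moebius (n+m) : ℤ) : ℝ)^2 / n - ∑ n ∈ Icc 1 N, ((moebius n : ℤ) : ℝ)^2 / n|
      ≤ m * (π^2/6) + 2*m := by
  set g : ℝ := ∑ n ∈ Icc 1 N, ((moebius (n+m) : ℤ) : ℝ)^2 / n with hg
  set g' : ℝ := ∑ n ∈ Icc 1 N, FF (n+m) with hg'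
  set f : ℝ := ∑ n ∈ Icc 1 N, FF n with hf
  have step1 : |g - g'| ≤ m * (π^2/6) := by
    have h1 : g - g' = ∑ n ∈ Icc 1 N, (((moebius (n+m) : ℤ) : ℝ)^2 / n - FF (n+m)) := by
      rw [hg, hg', Finset.sum_sub_distrib]
    have hterm : ∀ n ∈ Icc 1 N,
        ((moebius (n+m) : ℤ) : ℝ)^2 / n - FF (n+m) ≤ (m : ℝ) * (1 / (n:ℝ)^2) := by
      intro n hn
      rw [mem_Icc] at hn
      have hn1 : (1:ℝ) ≤ n := by exact_mod_cast hn.1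
      have hnpos : (0:ℝ) < n := by linarith
      have hnm : (0:ℝ) < (n:ℝ) + m := by positivity
      have hmu : ((moebius (n+m) : ℤ) : ℝ)^2 ≤ 1 := moeb_sq_le_one _
      have hmu0 : (0:ℝ) ≤ ((moebius (n+m) : ℤ) : ℝ)^2 := sq_nonneg _
      have hcast : ((n+m : ℕ) : ℝ) = (n:ℝ) + m := by push_cast; ring
      unfold FF
      rw [hcast]
      have key : ((moebius (n+m) : ℤ) : ℝ)^2 / n - ((moebius (n+m) : ℤ) : ℝ)^2 / ((n:ℝ)+m)
          ≤ 1/(n:ℝ) - 1/((n:ℝ)+m) := by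
        have hd : (0:ℝ) ≤ 1/(n:ℝ) - 1/((n:ℝ)+m) := by
          rw [sub_nonneg]
          exact one_div_le_one_div_of_le hnpos (by linarith)
        calc ((moebius (n+m) : ℤ) : ℝ)^2 / n - ((moebius (n+m) : ℤ) : ℝ)^2 / ((n:ℝ)+m)
            = ((moebius (n+m) : ℤ) : ℝ)^2 * (1/(n:ℝ) - 1/((n:ℝ)+m)) := by ring
          _ ≤ 1 * (1/(n:ℝ) - 1/((n:ℝ)+m)) := mul_le_mul_of_nonneg_right hmu hd
          _ = 1/(n:ℝ) - 1/((n:ℝ)+m) := one_mul _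
      have key2 : 1/(n:ℝ) - 1/((n:ℝ)+m) ≤ (m:ℝ) * (1/(n:ℝ)^2) := by
        have h3 : 1/(n:ℝ) - 1/((n:ℝ)+m) = (m:ℝ)/((n:ℝ)*((n:ℝ)+m)) := by
          field_simp
          ring
        rw [h3]
        have h4 : (n:ℝ)^2 ≤ (n:ℝ)*((n:ℝ)+m) := by nlinarith [Nat.cast_nonneg (α := ℝ) m]
        calc (m:ℝ)/((n:ℝ)*((n:ℝ)+m)) ≤ (m:ℝ)/(n:ℝ)^2 :=
              div_le_div_of_nonneg_left (by positivity) (by positivity) h4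
          _ = (m:ℝ) * (1/(n:ℝ)^2) := by ring
      linarith
    have hpos : ∀ n ∈ Icc 1 N, 0 ≤ ((moebius (n+m) : ℤ) : ℝ)^2 / n - FF (n+m) := by
      intro n hn
      rw [mem_Icc] at hn
      have hn1 : (1:ℝ) ≤ n := by exact_mod_cast hn.1
      have hcast : ((n+m : ℕ) : ℝ) = (n:ℝ) + m := by push_cast; ring
      unfold FF
      rw [hcast, sub_nonneg]
      exact div_le_div_of_nonneg_left (sq_nonneg _) (by linarith) (by
        have : (0:ℝ) ≤ m := Nat.cast_nonneg m
        linarith)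
    rw [h1, abs_of_nonneg (Finset.sum_nonneg hpos)]
    calc ∑ n ∈ Icc 1 N, (((moebius (n+m) : ℤ) : ℝ)^2 / n - FF (n+m))
        ≤ ∑ n ∈ Icc 1 N, (m:ℝ) * (1/(n:ℝ)^2) := Finset.sum_le_sum hterm
      _ = (m:ℝ) * ∑ n ∈ Icc 1 N, (1:ℝ)/(n:ℝ)^2 := by rw [Finset.mul_sum]
      _ ≤ (m:ℝ) * (π^2/6) := by
          exact mul_le_mul_of_nonneg_left (sum_sq_inv_le N) (Nat.cast_nonneg m)
  have step2 : g' = ∑ k ∈ Icc (1+m) (N+m), FF k := by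
    rw [← Finset.map_add_right_Icc, Finset.sum_map]
    rfl
  have step3 : |g' - f| ≤ 2*m := by
    rw [step2, hf, ← Finset.sum_sdiff_sub_sum_sdiff]
    have hsub1 : Icc (1+m) (N+m) \ Icc 1 N ⊆ Icc (N+1) (N+m) := by
      intro k hk
      simp only [Finset.mem_sdiff, mem_Icc] at hk ⊢
      omega
    have hsub2 : Icc 1 N \ Icc (1+m) (N+m) ⊆ Icc 1 m := by
      intro k hk
      simp only [Finset.mem_sdiff, mem_Icc] at hk ⊢
      omega
    have hb1 : ∑ k ∈ Icc (1+m) (N+m) \ Icc 1 N, FF k ≤ m := by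
      calc ∑ k ∈ Icc (1+m) (N+m) \ Icc 1 N, FF k
          ≤ ∑ k ∈ Icc (N+1) (N+m), FF k :=
            Finset.sum_le_sum_of_subset_of_nonneg hsub1 (fun i _ _ => FF_nonneg i)
        _ ≤ ∑ k ∈ Icc (N+1) (N+m), (1:ℝ) := Finset.sum_le_sum (fun i _ => FF_le_one i)
        _ = ((Icc (N+1) (N+m)).card : ℝ) := by simp
        _ = m := by rw [Nat.card_Icc, show N+m+1-(N+1) = m by omega]
    have hb2 : ∑ k ∈ Icc 1 N \ Icc (1+m) (N+m), FF k ≤ m := by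
      calc ∑ k ∈ Icc 1 N \ Icc (1+m) (N+m), FF k
          ≤ ∑ k ∈ Icc 1 m, FF k :=
            Finset.sum_le_sum_of_subset_of_nonneg hsub2 (fun i _ _ => FF_nonneg i)
        _ ≤ ∑ k ∈ Icc 1 m, (1:ℝ) := Finset.sum_le_sum (fun i _ => FF_le_one i)
        _ = ((Icc 1 m).card : ℝ) := by simp
        _ = m := by rw [Nat.card_Icc, show m+1-1 = m by omega]
    have hp1 : (0:ℝ) ≤ ∑ k ∈ Icc (1+m) (N+m) \ Icc 1 N, FF k :=
      Finset.sum_nonneg (fun i _ => FF_nonneg i)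
    have hp2 : (0:ℝ) ≤ ∑ k ∈ Icc 1 N \ Icc (1+m) (N+m), FF k :=
      Finset.sum_nonneg (fun i _ => FF_nonneg i)
    rw [abs_sub_le_iff]
    constructor <;> linarith
  calc |g - f| ≤ |g - g'| + |g' - f| := abs_sub_le g g' f
    _ ≤ m * (π^2/6) + 2*m := add_le_add step1 step3

lemma shifted_ii
    (hii : Tendsto (fun N : ℕ => (1 / Real.log N) * ∑ n ∈ Icc 1 N,
        ((moebius n : ℤ) : ℝ) ^ 2 / (n : ℝ)) atTop (nhds (6 / π ^ 2))) (m : ℕ) :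
    Tendsto (fun N : ℕ => (1 / Real.log N) * ∑ n ∈ Icc 1 N,
        ((moebius (n + m) : ℤ) : ℝ) ^ 2 / (n : ℝ)) atTop (nhds (6 / π ^ 2)) := by
  set C : ℝ := m * (π^2/6) + 2*m with hC
  have hdiff : Tendsto (fun N : ℕ => (1 / Real.log N) *
      (∑ n ∈ Icc 1 N, ((moebius (n+m) : ℤ) : ℝ)^2 / n
        - ∑ n ∈ Icc 1 N, ((moebius n : ℤ) : ℝ)^2 / n)) atTop (nhds 0) := by
    have hb : ∀ N : ℕ, ‖(1 / Real.log N) *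
        (∑ n ∈ Icc 1 N, ((moebius (n+m) : ℤ) : ℝ)^2 / n
          - ∑ n ∈ Icc 1 N, ((moebius n : ℤ) : ℝ)^2 / n)‖ ≤ |1 / Real.log N| * C := by
      intro N
      rw [norm_mul, Real.norm_eq_abs, Real.norm_eq_abs]
      exact mul_le_mul_of_nonneg_left (shifted_bound m N) (abs_nonneg _)
    have hg : Tendsto (fun N : ℕ => |1 / Real.log N| * C) atTop (nhds 0) := by
      have := (tendsto_one_div_log.abs).mul_const C
      simpa using this
    exact squeeze_zero_norm hb hg
  have := hii.add hdiff
  rw [add_zero] at this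
  convert this using 2 with N
  ring

lemma e_mul (x y : ℝ) : e x * e y = e (x + y) := by
  unfold e
  rw [← Complex.exp_add]
  congr 1
  push_cast
  ring

lemma e_conj (x : ℝ) : (starRingEnd ℂ) (e x) = e (-x) := by
  unfold e
  rw [← Complex.exp_conj]
  congr 1
  simp only [map_mul, Complex.conj_I, Complex.conj_ofReal, map_ofNat]
  push_cast
  ring

lemma mu_e_sq (c : ℤ) (x : ℝ) :
    ((c:ℂ) * e x) * (starRingEnd ℂ) ((c:ℂ) * e x) = (((c:ℝ)^2 : ℝ) : ℂ) := by
  rw [map_mul, e_conj]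
  have h1 : e x * e (-x) = 1 := by rw [e_mul, add_neg_cancel]; unfold e; simp
  have h2 : (starRingEnd ℂ) ((c:ℂ)) = (c:ℂ) := by simp
  push_cast
  calc (c:ℂ) * e x * ((starRingEnd ℂ) ((c:ℂ)) * e (-x))
      = (c:ℂ) * e x * ((c:ℂ) * e (-x)) := by rw [h2]
    _ = (c:ℂ)^2 * (e x * e (-x)) := by ring
    _ = (c:ℂ)^2 := by rw [h1, mul_one]

lemma mu_e_cross (c d : ℤ) (x y : ℝ) :
    ((c:ℂ) * e x) * (starRingEnd ℂ) ((d:ℂ) * e y) = (c:ℂ) * (d:ℂ) * e (x - y) := by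
  rw [map_mul, e_conj]
  have h2 : (starRingEnd ℂ) ((d:ℂ)) = (d:ℂ) := by simp
  rw [h2, show x - y = x + (-y) by ring, ← e_mul]
  ring


lemma part1
    (hi : ∀ h₁ h₂ : ℕ, h₁ ≠ h₂ → ∀ Q : Polynomial ℝ,
      Tendsto (fun N : ℕ => (1 / (Real.log N : ℂ)) * ∑ n ∈ Icc 1 N,
          ((moebius (n + h₁) : ℤ) : ℂ) * ((moebius (n + h₂) : ℤ) : ℂ) *
            e (Q.eval (n : ℝ)) / (n : ℂ))
        atTop (nhds 0))
    (hii : Tendsto (fun N : ℕ => (1 / Real.log N) * ∑ n ∈ Icc 1 N,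
        ((moebius n : ℤ) : ℝ) ^ 2 / (n : ℝ)) atTop (nhds (6 / π ^ 2)))
    (P : Polynomial ℝ) (s h : ℕ) (hs : 1 ≤ s) (hh : 1 ≤ h) :
    Tendsto (fun N : ℕ => (1 / Real.log N) * ∑ n ∈ Icc 1 N, (1 / (n : ℝ)) *
        ‖(1 / (h : ℂ)) * ∑ l ∈ Icc 1 h,
            ((moebius (n + l * s) : ℤ) : ℂ) * e (P.eval ((n + l * s : ℕ) : ℝ))‖ ^ 2)
      atTop (nhds (6 / (π ^ 2 * (h : ℝ)))) := by
  have hhC : (h:ℂ) ≠ 0 := Nat.cast_ne_zero.mpr (by omega)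
  have hπC : ((π:ℝ):ℂ) ≠ 0 := Complex.ofReal_ne_zero.mpr Real.pi_ne_zero
  set A : ℕ → ℕ → ℂ := fun l n =>
    ((moebius (n + l * s) : ℤ) : ℂ) * e (P.eval ((n + l * s : ℕ) : ℝ)) with hA
  have hA' : ∀ l n, A l n
      = ((moebius (n + l * s) : ℤ) : ℂ) * e (P.eval ((n + l * s : ℕ) : ℝ)) :=
    fun l n => rfl
  set G : ℕ → ℂ := fun N => ∑ l1 ∈ Icc 1 h, ∑ l2 ∈ Icc 1 h,
      (1/(h:ℂ))^2 * ((1 / (Real.log N : ℂ)) * ∑ n ∈ Icc 1 N,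
        A l1 n * (starRingEnd ℂ) (A l2 n) / (n : ℂ)) with hG
  have key : Tendsto G atTop (nhds ((6 / (π ^ 2 * (h:ℝ)) : ℝ) : ℂ)) := by
    have hlim : ∑ l1 ∈ Icc 1 h, ∑ l2 ∈ Icc 1 h,
        (if l1 = l2 then (1/(h:ℂ))^2 * ((6 / π^2 : ℝ) : ℂ) else 0)
        = ((6 / (π ^ 2 * (h:ℝ)) : ℝ) : ℂ) := by
      have hstep : ∀ l1 ∈ Icc 1 h, ∑ l2 ∈ Icc 1 h,
          (if l1 = l2 then (1/(h:ℂ))^2 * ((6 / π^2 : ℝ) : ℂ) else 0)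
          = (1/(h:ℂ))^2 * ((6 / π^2 : ℝ) : ℂ) := by
        intro l1 hl1
        rw [Finset.sum_ite_eq, if_pos hl1]
      rw [Finset.sum_congr rfl hstep, Finset.sum_const, Nat.card_Icc,
        show h + 1 - 1 = h by omega]
      push_cast
      rw [nsmul_eq_mul]
      field_simp
    rw [hG, ← hlim]
    refine tendsto_finset_sum _ (fun l1 hl1 => tendsto_finset_sum _ (fun l2 hl2 => ?_))
    by_cases hl : l1 = l2
    · subst hl
      rw [if_pos rfl]
      have h2 : Tendsto (fun N : ℕ => (((1 / Real.log N) * ∑ n ∈ Icc 1 N,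
          ((moebius (n + l1 * s) : ℤ) : ℝ) ^ 2 / (n : ℝ) : ℝ) : ℂ)) atTop
          (nhds ((6/π^2 : ℝ) : ℂ)) :=
        (Complex.continuous_ofReal.tendsto _).comp (shifted_ii hii (l1 * s))
      have h3 := h2.const_mul ((1/(h:ℂ))^2)
      refine h3.congr (fun N => ?_)
      congr 1
      have hterm : ∀ n : ℕ,
          ((((moebius (n + l1 * s) : ℤ) : ℝ) ^ 2 / (n : ℝ) : ℝ) : ℂ)
            = A l1 n * (starRingEnd ℂ) (A l1 n) / (n : ℂ) := by
        intro n
        rw [hA', mu_e_sq]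
        push_cast
        ring
      rw [show (((1 / Real.log N) * ∑ n ∈ Icc 1 N,
            ((moebius (n + l1 * s) : ℤ) : ℝ) ^ 2 / (n : ℝ) : ℝ) : ℂ)
          = (1 / (Real.log N : ℂ)) * ∑ n ∈ Icc 1 N,
            ((((moebius (n + l1 * s) : ℤ) : ℝ) ^ 2 / (n : ℝ) : ℝ) : ℂ) by push_cast; ring]
      rw [Finset.sum_congr rfl (fun n _ => hterm n)]
    · rw [if_neg hl]
      have hne : l1 * s ≠ l2 * s := fun hEq =>
        hl (Nat.eq_of_mul_eq_mul_right (by omega) hEq)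
      have h0 := (hi (l1*s) (l2*s) hne
        (P.comp (Polynomial.X + Polynomial.C ((l1 * s : ℕ) : ℝ))
          - P.comp (Polynomial.X + Polynomial.C ((l2 * s : ℕ) : ℝ)))).const_mul ((1/(h:ℂ))^2)
      rw [mul_zero] at h0
      refine h0.congr (fun N => ?_)
      congr 1
      congr 1
      refine Finset.sum_congr rfl (fun n hn => ?_)
      rw [hA', hA', mu_e_cross]
      have hQ : (P.comp (Polynomial.X + Polynomial.C ((l1 * s : ℕ) : ℝ))
          - P.comp (Polynomial.X + Polynomial.C ((l2 * s : ℕ) : ℝ))).eval (n : ℝ)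
          = P.eval ((n + l1 * s : ℕ) : ℝ) - P.eval ((n + l2 * s : ℕ) : ℝ) := by
        simp only [Polynomial.eval_sub, Polynomial.eval_comp, Polynomial.eval_add,
          Polynomial.eval_X, Polynomial.eval_C]
        have c1 : ((n + l1 * s : ℕ) : ℝ) = (n : ℝ) + ((l1 * s : ℕ) : ℝ) := by push_cast; ring
        have c2 : ((n + l2 * s : ℕ) : ℝ) = (n : ℝ) + ((l2 * s : ℕ) : ℝ) := by push_cast; ring
        rw [c1, c2]
      rw [hQ]
  -- now extract real part
  have hre := (Complex.continuous_re.tendsto _).comp key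
  have hre' : Tendsto (fun N => (G N).re) atTop (nhds (6 / (π ^ 2 * (h:ℝ)))) := by
    simpa only [Function.comp_def, Complex.ofReal_re] using hre
  refine hre'.congr (fun N => ?_)
  -- pointwise: (G N).re = real mean square
  have hzz : ∀ n : ℕ,
      (∑ l1 ∈ Icc 1 h, ∑ l2 ∈ Icc 1 h, (1/(h:ℂ))^2 * (A l1 n * (starRingEnd ℂ) (A l2 n) / (n:ℂ)))
      = (((1 / (n : ℝ)) * ‖(1 / (h : ℂ)) * ∑ l ∈ Icc 1 h, A l n‖ ^ 2 : ℝ) : ℂ) := by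
    intro n
    have step1 : ((1 / (h : ℂ)) * ∑ l ∈ Icc 1 h, A l n) *
        (starRingEnd ℂ) ((1 / (h : ℂ)) * ∑ l ∈ Icc 1 h, A l n) / (n:ℂ)
        = ∑ l1 ∈ Icc 1 h, ∑ l2 ∈ Icc 1 h,
          (1/(h:ℂ))^2 * (A l1 n * (starRingEnd ℂ) (A l2 n) / (n:ℂ)) := by
      rw [map_mul, map_sum, show (starRingEnd ℂ) (1/(h:ℂ)) = 1/(h:ℂ) by simp]
      rw [show ((1 / (h : ℂ)) * ∑ l ∈ Icc 1 h, A l n) *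
          ((1 / (h : ℂ)) * ∑ l ∈ Icc 1 h, (starRingEnd ℂ) (A l n)) / (n:ℂ)
          = (1/(h:ℂ))^2 * ((∑ l ∈ Icc 1 h, A l n) *
            (∑ l ∈ Icc 1 h, (starRingEnd ℂ) (A l n)) / (n:ℂ)) by ring]
      rw [Finset.sum_mul_sum, Finset.sum_div, Finset.mul_sum]
      refine Finset.sum_congr rfl (fun l1 _ => ?_)
      rw [Finset.sum_div, Finset.mul_sum]
    rw [← step1, Complex.mul_conj, Complex.normSq_eq_norm_sq]
    push_cast
    ring
  have hswap : G N = (1 / (Real.log N : ℂ)) * ∑ n ∈ Icc 1 N,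
      ∑ l1 ∈ Icc 1 h, ∑ l2 ∈ Icc 1 h,
        (1/(h:ℂ))^2 * (A l1 n * (starRingEnd ℂ) (A l2 n) / (n:ℂ)) := by
    rw [hG]
    calc ∑ l1 ∈ Icc 1 h, ∑ l2 ∈ Icc 1 h,
        (1/(h:ℂ))^2 * ((1 / (Real.log N : ℂ)) * ∑ n ∈ Icc 1 N,
          A l1 n * (starRingEnd ℂ) (A l2 n) / (n : ℂ))
        = ∑ l1 ∈ Icc 1 h, ∑ l2 ∈ Icc 1 h, ∑ n ∈ Icc 1 N,
            (1 / (Real.log N : ℂ)) * ((1/(h:ℂ))^2 * (A l1 n * (starRingEnd ℂ) (A l2 n) / (n:ℂ))) := by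
          refine Finset.sum_congr rfl (fun l1 _ => Finset.sum_congr rfl (fun l2 _ => ?_))
          simp only [Finset.mul_sum]
          exact Finset.sum_congr rfl (fun n _ => by ring)
      _ = ∑ n ∈ Icc 1 N, ∑ l1 ∈ Icc 1 h, ∑ l2 ∈ Icc 1 h,
            (1 / (Real.log N : ℂ)) * ((1/(h:ℂ))^2 * (A l1 n * (starRingEnd ℂ) (A l2 n) / (n:ℂ))) := by
          rw [Finset.sum_congr rfl (fun l1 (_ : l1 ∈ Icc 1 h) => Finset.sum_comm)]
          exact Finset.sum_comm
      _ = (1 / (Real.log N : ℂ)) * ∑ n ∈ Icc 1 N, ∑ l1 ∈ Icc 1 h, ∑ l2 ∈ Icc 1 h,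
            (1/(h:ℂ))^2 * (A l1 n * (starRingEnd ℂ) (A l2 n) / (n:ℂ)) := by
          rw [Finset.mul_sum]
          refine Finset.sum_congr rfl (fun n _ => ?_)
          rw [Finset.mul_sum]
          refine Finset.sum_congr rfl (fun l1 _ => ?_)
          rw [Finset.mul_sum]
  rw [hswap, Finset.sum_congr rfl (fun n _ => hzz n)]
  rw [show (1 / (Real.log N : ℂ)) * ∑ n ∈ Icc 1 N,
      (((1 / (n : ℝ)) * ‖(1 / (h : ℂ)) * ∑ l ∈ Icc 1 h, A l n‖ ^ 2 : ℝ) : ℂ)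
      = (((1 / Real.log N) * ∑ n ∈ Icc 1 N,
        (1 / (n : ℝ)) * ‖(1 / (h : ℂ)) * ∑ l ∈ Icc 1 h, A l n‖ ^ 2 : ℝ) : ℂ) by push_cast; ring]
  rw [Complex.ofReal_re]


/-- Assuming logarithmically averaged two-point Chowla twisted by polynomial phases (i)
and the logarithmic mean square of μ (ii), the logarithmic mean square of
`(1/h)∑_l μ(n+ls)e(P(n+ls))` equals `6/(π²h)`, and by Cauchy–Schwarz the first moment
is at most `√(6/π²)·h^{-1/2}`, independently of `s`. -/
theorem stmt_11
    (hi : ∀ h₁ h₂ : ℕ, h₁ ≠ h₂ → ∀ Q : Polynomial ℝ,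
      Tendsto (fun N : ℕ => (1 / (Real.log N : ℂ)) * ∑ n ∈ Icc 1 N,
          ((moebius (n + h₁) : ℤ) : ℂ) * ((moebius (n + h₂) : ℤ) : ℂ) *
            e (Q.eval (n : ℝ)) / (n : ℂ))
        atTop (nhds 0))
    (hii : Tendsto (fun N : ℕ => (1 / Real.log N) * ∑ n ∈ Icc 1 N,
        ((moebius n : ℤ) : ℝ) ^ 2 / (n : ℝ)) atTop (nhds (6 / π ^ 2))) :
    ∀ (P : Polynomial ℝ) (s h : ℕ), 1 ≤ s → 1 ≤ h →
      Tendsto (fun N : ℕ => (1 / Real.log N) * ∑ n ∈ Icc 1 N, (1 / (n : ℝ)) *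
          ‖(1 / (h : ℂ)) * ∑ l ∈ Icc 1 h,
              ((moebius (n + l * s) : ℤ) : ℂ) * e (P.eval ((n + l * s : ℕ) : ℝ))‖ ^ 2)
        atTop (nhds (6 / (π ^ 2 * (h : ℝ)))) ∧
      limsup (fun N : ℕ => (1 / Real.log N) * ∑ n ∈ Icc 1 N, (1 / (n : ℝ)) *
          ‖(1 / (h : ℂ)) * ∑ l ∈ Icc 1 h,
              ((moebius (n + l * s) : ℤ) : ℂ) * e (P.eval ((n + l * s : ℕ) : ℝ))‖) atTop
        ≤ Real.sqrt (6 / π ^ 2) * (h : ℝ) ^ (-(1 / 2 : ℝ)) := by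
  intro P s h hs hh
  have hAt := part1 hi hii P s h hs hh
  refine ⟨hAt, ?_⟩
  have hlog0 : ∀ N : ℕ, 0 ≤ Real.log N := by
    intro N
    rcases N with _ | n
    · simp
    · exact Real.log_nonneg (by exact_mod_cast Nat.one_le_iff_ne_zero.mpr (by omega))
  set AA : ℕ → ℝ := fun N : ℕ => (1 / Real.log N) * ∑ n ∈ Icc 1 N, (1 / (n : ℝ)) *
      ‖(1 / (h : ℂ)) * ∑ l ∈ Icc 1 h,
          ((moebius (n + l * s) : ℤ) : ℂ) * e (P.eval ((n + l * s : ℕ) : ℝ))‖ ^ 2 with hAA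
  set F : ℕ → ℝ := fun N : ℕ => (1 / Real.log N) * ∑ n ∈ Icc 1 N, (1 / (n : ℝ)) *
      ‖(1 / (h : ℂ)) * ∑ l ∈ Icc 1 h,
          ((moebius (n + l * s) : ℤ) : ℂ) * e (P.eval ((n + l * s : ℕ) : ℝ))‖ with hF
  set B : ℕ → ℝ := fun N : ℕ => (1 / Real.log N) * ∑ n ∈ Icc 1 N, (1 / (n : ℝ)) with hB
  have hF0 : ∀ N, 0 ≤ F N := by
    intro N
    exact mul_nonneg (div_nonneg zero_le_one (hlog0 N))
      (Finset.sum_nonneg (fun n _ => by positivity))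
  have hFB : ∀ N, F N ≤ Real.sqrt (B N * AA N) := by
    intro N
    have hsq : F N ^ 2 ≤ B N * AA N := by
      have hcs := Finset.sum_mul_sq_le_sq_mul_sq (Icc 1 N)
        (fun n : ℕ => Real.sqrt (1 / (n : ℝ)))
        (fun n : ℕ => Real.sqrt (1 / (n : ℝ)) * ‖(1 / (h : ℂ)) * ∑ l ∈ Icc 1 h,
          ((moebius (n + l * s) : ℤ) : ℂ) * e (P.eval ((n + l * s : ℕ) : ℝ))‖)
      have e1 : ∀ n : ℕ, Real.sqrt (1 / (n : ℝ)) * (Real.sqrt (1 / (n : ℝ)) * ‖(1 / (h : ℂ)) * ∑ l ∈ Icc 1 h,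
          ((moebius (n + l * s) : ℤ) : ℂ) * e (P.eval ((n + l * s : ℕ) : ℝ))‖)
          = (1 / (n : ℝ)) * ‖(1 / (h : ℂ)) * ∑ l ∈ Icc 1 h,
          ((moebius (n + l * s) : ℤ) : ℂ) * e (P.eval ((n + l * s : ℕ) : ℝ))‖ := by
        intro n
        rw [← mul_assoc, Real.mul_self_sqrt (by positivity)]
      have e2 : ∀ n : ℕ, (Real.sqrt (1 / (n : ℝ)))^2 = 1 / (n : ℝ) :=
        fun n => Real.sq_sqrt (by positivity)
      have e3 : ∀ n : ℕ, (Real.sqrt (1 / (n : ℝ)) * ‖(1 / (h : ℂ)) * ∑ l ∈ Icc 1 h,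
          ((moebius (n + l * s) : ℤ) : ℂ) * e (P.eval ((n + l * s : ℕ) : ℝ))‖)^2
          = (1 / (n : ℝ)) * ‖(1 / (h : ℂ)) * ∑ l ∈ Icc 1 h,
          ((moebius (n + l * s) : ℤ) : ℂ) * e (P.eval ((n + l * s : ℕ) : ℝ))‖^2 := by
        intro n
        rw [mul_pow, e2]
      rw [Finset.sum_congr rfl (fun n _ => e1 n), Finset.sum_congr rfl (fun n _ => e2 n),
        Finset.sum_congr rfl (fun n _ => e3 n)] at hcs
      have hln : 0 ≤ (1 / Real.log N) ^ 2 := sq_nonneg _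
      calc F N ^ 2 = (1 / Real.log N)^2 * (∑ n ∈ Icc 1 N, (1 / (n : ℝ)) *
            ‖(1 / (h : ℂ)) * ∑ l ∈ Icc 1 h,
              ((moebius (n + l * s) : ℤ) : ℂ) * e (P.eval ((n + l * s : ℕ) : ℝ))‖)^2 := by
            rw [hF]; ring
        _ ≤ (1 / Real.log N)^2 * ((∑ n ∈ Icc 1 N, 1 / (n : ℝ)) *
            ∑ n ∈ Icc 1 N, (1 / (n : ℝ)) * ‖(1 / (h : ℂ)) * ∑ l ∈ Icc 1 h,
              ((moebius (n + l * s) : ℤ) : ℂ) * e (P.eval ((n + l * s : ℕ) : ℝ))‖^2) :=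
            mul_le_mul_of_nonneg_left hcs hln
        _ = B N * AA N := by rw [hB, hAA]; ring
    calc F N = Real.sqrt (F N ^ 2) := (Real.sqrt_sq (hF0 N)).symm
      _ ≤ Real.sqrt (B N * AA N) := Real.sqrt_le_sqrt hsq
  have hBsum : ∀ N : ℕ, ∑ n ∈ Icc 1 N, (1 / (n : ℝ)) = ((harmonic N : ℚ) : ℝ) := by
    intro N
    rw [harmonic_eq_sum_Icc]
    push_cast
    simp [one_div]
  have hBlow : ∀ᶠ N in (atTop : Filter ℕ), (1:ℝ) ≤ B N := by
    filter_upwards [eventually_ge_atTop 2] with N hN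
    have hN1 : (1:ℝ) < N := by exact_mod_cast Nat.lt_of_lt_of_le Nat.one_lt_two hN
    have hlogpos : 0 < Real.log N := Real.log_pos hN1
    have h1 : Real.log N ≤ ((harmonic N : ℚ) : ℝ) := by
      refine le_trans ?_ (log_add_one_le_harmonic N)
      have : ((N:ℝ)) ≤ ((N+1 : ℕ) : ℝ) := by push_cast; linarith
      exact Real.log_le_log (by linarith) this
    calc (1:ℝ) = (1 / Real.log N) * Real.log N := by field_simp
      _ ≤ B N := by
          rw [hB]
          simp only
          rw [hBsum N]
          exact mul_le_mul_of_nonneg_left h1 (div_nonneg zero_le_one hlogpos.le)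
  have hBhigh : ∀ᶠ N in (atTop : Filter ℕ), B N ≤ 1 / Real.log N + 1 := by
    filter_upwards [eventually_ge_atTop 2] with N hN
    have hN1 : (1:ℝ) < N := by exact_mod_cast Nat.lt_of_lt_of_le Nat.one_lt_two hN
    have hlogpos : 0 < Real.log N := Real.log_pos hN1
    have h1 : ((harmonic N : ℚ) : ℝ) ≤ 1 + Real.log N := harmonic_le_one_add_log N
    calc B N = (1 / Real.log N) * ((harmonic N : ℚ) : ℝ) := by rw [hB]; simp only; rw [hBsum N]
      _ ≤ (1 / Real.log N) * (1 + Real.log N) := mul_le_mul_of_nonneg_left h1 (div_nonneg zero_le_one hlogpos.le)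
      _ = 1 / Real.log N + 1 := by field_simp
  have hupper : Tendsto (fun N : ℕ => 1 / Real.log N + 1) atTop (nhds 1) := by
    have := tendsto_one_div_log.add (tendsto_const_nhds (x := (1:ℝ)) (f := (atTop : Filter ℕ)))
    simpa using this
  have hBtend : Tendsto B atTop (nhds 1) :=
    tendsto_of_tendsto_of_tendsto_of_le_of_le' tendsto_const_nhds hupper hBlow hBhigh
  have hg : Tendsto (fun N : ℕ => Real.sqrt (B N * AA N)) atTop
      (nhds (Real.sqrt (1 * (6 / (π ^ 2 * (h:ℝ)))))) := (hBtend.mul hAt).sqrt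
  have hco : IsCoboundedUnder (· ≤ ·) (atTop : Filter ℕ) F :=
    Filter.IsCoboundedUnder.of_frequently_ge
      ((Filter.Eventually.of_forall hF0).frequently)
  have hbd : IsBoundedUnder (· ≤ ·) (atTop : Filter ℕ) (fun N : ℕ => Real.sqrt (B N * AA N)) :=
    hg.isBoundedUnder_le
  have hls : limsup F atTop ≤ Real.sqrt (1 * (6 / (π ^ 2 * (h:ℝ)))) := by
    rw [← hg.limsup_eq]
    exact Filter.limsup_le_limsup (Filter.Eventually.of_forall hFB) hco hbd
  refine le_trans hls (le_of_eq ?_)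
  rw [one_mul]
  have hh0 : (h:ℝ) ≠ 0 := Nat.cast_ne_zero.mpr (by omega)
  have hsplit : (6:ℝ) / (π ^ 2 * (h:ℝ)) = (6 / π ^ 2) * ((h:ℝ))⁻¹ := by
    field_simp
  rw [hsplit, Real.sqrt_mul (by positivity) _, Real.sqrt_inv]
  congr 1
  rw [Real.rpow_neg (Nat.cast_nonneg h), ← Real.sqrt_eq_rpow]
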